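/- The sparse-histogram mechanism, which releases z_j = θ_j exactly for bins j with empirical count zero (when 2k ≤ γn) and z_j = θ_j + (2/(nα))L_j with i.i.d. standard Laplace noise L_j otherwise, satisfies (α,γ)-random differential privacy. -/

import Mathlib

open MeasureTheory

def firstN {𝒳 : Type*} {n : ℕ} (ω : Fin (n + 1) → 𝒳) : Fin n → 𝒳 :=
  fun i => ω i.castSucc

def swapLast {𝒳 : Type*} {n : ℕ} (ω : Fin (n + 1) → 𝒳) : Fin n → 𝒳 :=
  fun i => if (i : ℕ) = n - 1 then ω (Fin.last n) else ω i.castSucc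

/-- Number of data points falling in bin `j`. -/
def binCount {k n : ℕ} (x : Fin n → Fin k) (j : Fin k) : ℕ :=
  (Finset.univ.filter fun i => x i = j).card

/-- The empirical histogram `θ_j = (1/n) Σᵢ 1{xᵢ ∈ B_j}`. -/
noncomputable def hist {k n : ℕ} (x : Fin n → Fin k) (j : Fin k) : ℝ :=
  (binCount x j : ℝ) / n

open Classical in
/-- The sparse-histogram mechanism: when `2k ≤ γn`, empty bins are released exactly
(`z_j = θ_j`) and occupied bins get Laplace noise `z_j = θ_j + (2/(nα)) L_j` with
`L_j` i.i.d. standard Laplace (`lap`). -/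
noncomputable def sparseMech {k n : ℕ} (lap : Measure ℝ) [IsProbabilityMeasure lap]
    (α γ : ℝ) (x : Fin n → Fin k) : Measure (Fin k → ℝ) :=
  (Measure.pi fun _ : Fin k => lap).map
    (fun L j => if binCount x j = 0 ∧ 2 * (k : ℝ) ≤ γ * n then hist x j
      else hist x j + 2 / ((n : ℝ) * α) * L j)

open Finset
open scoped ENNReal


lemma lintegral_pi_prod {ι : Type*} [Fintype ι] [DecidableEq ι] {X : ι → Type*}
    [∀ i, MeasurableSpace (X i)] (μ : ∀ i, Measure (X i)) [∀ i, SigmaFinite (μ i)]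
    [Nonempty (∀ i, X i)] (g : ∀ i, X i → ℝ≥0∞) (hg : ∀ i, Measurable (g i)) :
    ∫⁻ x, ∏ i, g i (x i) ∂Measure.pi μ = ∏ i, ∫⁻ t, g i t ∂μ i := by
  obtain ⟨x0⟩ := ‹Nonempty (∀ i, X i)›
  have hf : Measurable fun y : ∀ i, X i => ∏ i, g i (y i) :=
    Finset.measurable_prod _ fun i _ => (hg i).comp (measurable_pi_apply i)
  have main : ∀ s : Finset ι, ∀ x, (∫⋯∫⁻_s, (fun y => ∏ i, g i (y i)) ∂μ) x
      = (∏ i ∈ s, ∫⁻ t, g i t ∂μ i) * ∏ i ∈ sᶜ, g i (x i) := by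
    intro s
    induction s using Finset.induction with
    | empty => intro x; simp
    | @insert i s hi ih =>
      intro x
      rw [lmarginal_insert _ hf hi]
      have hisc : i ∈ sᶜ := Finset.mem_compl.2 hi
      have step : ∀ xi : X i, (∫⋯∫⁻_s, (fun y => ∏ j, g j (y j)) ∂μ) (Function.update x i xi)
          = ((∏ j ∈ s, ∫⁻ t, g j t ∂μ j) * ∏ j ∈ sᶜ.erase i, g j (x j)) * g i xi := by
        intro xi
        rw [ih]
        rw [← Finset.mul_prod_erase _ _ hisc]
        have : ∀ j ∈ sᶜ.erase i, g j (Function.update x i xi j) = g j (x j) := by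
          intro j hj
          rw [Function.update_of_ne (Finset.ne_of_mem_erase hj)]
        rw [Finset.prod_congr rfl this, Function.update_self]
        ring
      simp_rw [step]
      rw [lintegral_const_mul _ (hg i), Finset.prod_insert hi, Finset.compl_insert]
      ring
  have := main Finset.univ x0
  simp only [Finset.compl_univ, Finset.prod_empty, mul_one] at this
  rw [lintegral_eq_lmarginal_univ x0, this]

lemma pi_withDensity' {ι : Type*} [Fintype ι] [DecidableEq ι] {X : ι → Type*}
    [∀ i, MeasurableSpace (X i)] (μ : ∀ i, Measure (X i)) [∀ i, SigmaFinite (μ i)]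
    [Nonempty (∀ i, X i)] (f : ∀ i, X i → ℝ≥0∞) (hf : ∀ i, Measurable (f i))
    [∀ i, SigmaFinite ((μ i).withDensity (f i))] :
    Measure.pi (fun i => (μ i).withDensity (f i))
      = (Measure.pi μ).withDensity (fun x => ∏ i, f i (x i)) := by
  refine Measure.pi_eq fun s hs => ?_
  rw [withDensity_apply _ (MeasurableSet.univ_pi hs), ← lintegral_indicator (MeasurableSet.univ_pi hs) (fun x => ∏ i, f i (x i))]
  have hind : ∀ x : ∀ i, X i, (Set.pi Set.univ s).indicator (fun x => ∏ i, f i (x i)) x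
      = ∏ i, (s i).indicator (f i) (x i) := by
    intro x
    by_cases hx : x ∈ Set.pi Set.univ s
    · rw [Set.indicator_of_mem hx]
      refine Finset.prod_congr rfl fun i _ => ?_
      rw [Set.indicator_of_mem (hx i trivial)]
    · rw [Set.indicator_of_notMem hx]
      obtain ⟨i, hxi⟩ := by simpa [Set.mem_pi] using hx
      exact (Finset.prod_eq_zero (Finset.mem_univ i) (Set.indicator_of_notMem hxi _)).symm
  simp_rw [hind]
  rw [lintegral_pi_prod μ _ (fun i => (hf i).indicator (hs i))]
  refine Finset.prod_congr rfl fun i _ => ?_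
  rw [withDensity_apply _ (hs i), ← lintegral_indicator (hs i)]

lemma map_withDensity_mp {Y : Type*} [MeasurableSpace Y] (μ : Measure Y) (e : Y ≃ᵐ Y)
    (he : MeasurePreserving e μ μ) (G : Y → ℝ≥0∞) (_hG : Measurable G) :
    (μ.withDensity G).map e = μ.withDensity (fun y => G (e.symm y)) := by
  ext s hs
  rw [Measure.map_apply e.measurable hs, withDensity_apply _ (e.measurable hs),
    withDensity_apply _ hs]
  have := he.setLIntegral_comp_preimage_emb e.measurableEmbedding (fun y => G (e.symm y)) s
  simpa using this

-- difference of bin counts for samples differing at one index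
lemma binCount_diff {k n : ℕ} (x x' : Fin n → Fin k) (i0 : Fin n)
    (hx : ∀ i, i ≠ i0 → x i = x' i) (j : Fin k) :
    (binCount x' j : ℝ) - (binCount x j : ℝ)
      = (if x' i0 = j then (1:ℝ) else 0) - (if x i0 = j then 1 else 0) := by
  classical
  unfold binCount
  rw [Finset.card_filter, Finset.card_filter]
  push_cast
  rw [← Finset.sum_sub_distrib]
  exact Finset.sum_eq_single_of_mem i0 (Finset.mem_univ i0)
    (fun b _ hb => by rw [hx b hb]; ring)

open Classical in
theorem key {k n : ℕ} (hn : 0 < n) {α γ : ℝ} (hα : 0 < α)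
    (lap : Measure ℝ) [IsProbabilityMeasure lap]
    (hlap : lap = volume.withDensity fun t => ENNReal.ofReal ((1 / 2) * Real.exp (-|t|)))
    (x x' : Fin n → Fin k) (i0 : Fin n) (hx : ∀ i, i ≠ i0 → x i = x' i)
    (hzero : ∀ j, binCount x j = 0 ↔ binCount x' j = 0)
    (B : Set (Fin k → ℝ)) (hB : MeasurableSet B) :
    sparseMech lap α γ x' B ≤ ENNReal.ofReal (Real.exp α) * sparseMech lap α γ x B := by
  classical
  set c : ℝ := 2 / ((n : ℝ) * α) with hc_def
  have hn' : (0:ℝ) < n := by exact_mod_cast hn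
  have hc : 0 < c := by positivity
  set g : ℝ → ℝ≥0∞ := fun t => ENNReal.ofReal ((1 / 2) * Real.exp (-|t|)) with hg_def
  have hgm : Measurable g := by
    apply Measurable.ennreal_ofReal
    fun_prop
  set d : Fin k → ℝ := fun j => (hist x' j - hist x j) / c with hd_def
  -- the mechanism maps
  set F : (Fin n → Fin k) → (Fin k → ℝ) → (Fin k → ℝ) := fun y L j =>
    if binCount y j = 0 ∧ 2 * (k : ℝ) ≤ γ * n then hist y j
    else hist y j + c * L j with hF_def
  have hFm : ∀ y : Fin n → Fin k, Measurable (F y) := by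
    intro y
    apply measurable_pi_lambda
    intro j
    by_cases h : binCount y j = 0 ∧ 2 * (k : ℝ) ≤ γ * n
    · simp only [F, h, if_true]; exact measurable_const
    · simp only [F, h, if_false]
      exact measurable_const.add (by fun_prop)
  have hsm : ∀ y, sparseMech lap α γ y = (Measure.pi fun _ : Fin k => lap).map (F y) := by
    intro y; rfl
  -- translation equivalence
  set e : (Fin k → ℝ) ≃ᵐ (Fin k → ℝ) := (Homeomorph.addRight d).toMeasurableEquiv with he_def
  have he_app : ∀ L : Fin k → ℝ, e L = fun j => L j + d j := fun L => rfl
  have he_symm : ∀ L : Fin k → ℝ, e.symm L = fun j => L j - d j := by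
    intro L
    have h1 : e (L - d) = L := by
      funext j
      show (L - d) j + d j = L j
      simp
    calc e.symm L = e.symm (e (L - d)) := by rw [h1]
      _ = L - d := MeasurableEquiv.symm_apply_apply e _
      _ = fun j => L j - d j := rfl
  have he_pres : MeasurePreserving e (Measure.pi fun _ : Fin k => (volume : Measure ℝ))
      (Measure.pi fun _ : Fin k => (volume : Measure ℝ)) := by
    have := measurePreserving_pi (fun _ : Fin k => (volume : Measure ℝ))
      (fun _ : Fin k => (volume : Measure ℝ))
      (f := fun (_ : Fin k) (t : ℝ) => t + d _) (fun i => measurePreserving_add_right volume (d i))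
    convert this using 1
    exact funext he_app
  -- lap^k as density over volume^k
  haveI hsf : SigmaFinite (volume.withDensity g) := by rw [← hlap]; infer_instance
  have hlapi : (Measure.pi fun _ : Fin k => lap)
      = (Measure.pi fun _ : Fin k => (volume : Measure ℝ)).withDensity (fun L => ∏ j, g (L j)) := by
    conv_lhs => rw [hlap]
    exact pi_withDensity' (fun _ : Fin k => (volume : Measure ℝ)) (fun _ => g) (fun _ => hgm)
  have hGm : Measurable fun L : Fin k → ℝ => ∏ j, g (L j) :=
    Finset.measurable_prod _ fun j _ => hgm.comp (measurable_pi_apply j)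
  -- the shifted measure
  have hmap : (Measure.pi fun _ : Fin k => lap).map e
      = (Measure.pi fun _ : Fin k => (volume : Measure ℝ)).withDensity
          (fun L => ∏ j, g (L j - d j)) := by
    rw [hlapi, map_withDensity_mp _ e he_pres _ hGm]
    refine congrArg (Measure.withDensity _) (funext fun L => ?_)
    rw [he_symm L]
  -- sum of shifts is at most α
  have hsum : ∑ j, |d j| ≤ α := by
    have hdiff : ∀ j, |d j|
        ≤ ((if x i0 = j then (1:ℝ) else 0) + (if x' i0 = j then 1 else 0)) / n / c := by
      intro j
      rw [hd_def]
      dsimp only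
      rw [abs_div, abs_of_nonneg hc.le]
      gcongr
      have h0 : hist x' j - hist x j = ((binCount x' j : ℝ) - binCount x j) / n := by
        unfold hist; ring
      rw [h0, abs_div, abs_of_nonneg hn'.le]
      gcongr
      rw [binCount_diff x x' i0 hx j]
      split_ifs <;> norm_num
    calc ∑ j, |d j|
        ≤ ∑ j, ((if x i0 = j then (1:ℝ) else 0) + (if x' i0 = j then 1 else 0)) / n / c :=
          Finset.sum_le_sum fun j _ => hdiff j
      _ = α := by
          rw [← Finset.sum_div, ← Finset.sum_div, Finset.sum_add_distrib]
          simp only [Finset.sum_ite_eq, Finset.mem_univ, if_true]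
          rw [hc_def]
          field_simp
          ring
  -- pointwise density bound
  have hpoint : ∀ L : Fin k → ℝ, ∏ j, g (L j - d j)
      ≤ ENNReal.ofReal (Real.exp α) * ∏ j, g (L j) := by
    intro L
    have hfac : ∀ j, g (L j - d j) ≤ ENNReal.ofReal (Real.exp (|d j|)) * g (L j) := by
      intro j
      rw [hg_def]
      dsimp only
      rw [← ENNReal.ofReal_mul (Real.exp_nonneg _)]
      apply ENNReal.ofReal_le_ofReal
      rw [← mul_assoc, mul_comm (Real.exp (|d j|)) (1/2 : ℝ), mul_assoc]
      apply mul_le_mul_of_nonneg_left _ (by norm_num)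
      rw [← Real.exp_add]
      apply Real.exp_le_exp.2
      have := abs_sub_abs_le_abs_sub (L j) (L j - d j)
      have h2 : |L j - (L j - d j)| = |d j| := by ring_nf
      nlinarith [abs_nonneg (d j)]
    calc ∏ j, g (L j - d j) ≤ ∏ j, (ENNReal.ofReal (Real.exp (|d j|)) * g (L j)) :=
          Finset.prod_le_prod' fun j _ => hfac j
      _ = (∏ j, ENNReal.ofReal (Real.exp (|d j|))) * ∏ j, g (L j) := Finset.prod_mul_distrib
      _ ≤ ENNReal.ofReal (Real.exp α) * ∏ j, g (L j) := by
          apply mul_le_mul_left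
          rw [← ENNReal.ofReal_prod_of_nonneg (fun i _ => Real.exp_nonneg _), ← Real.exp_sum]
          exact ENNReal.ofReal_le_ofReal (Real.exp_le_exp.2 hsum)
  -- composition
  have hcomp : F x' = (F x) ∘ ⇑e := by
    funext L
    funext j
    have hcond : (binCount x j = 0 ∧ 2 * (k : ℝ) ≤ γ * n)
        ↔ (binCount x' j = 0 ∧ 2 * (k : ℝ) ≤ γ * n) := by
      rw [hzero j]
    simp only [Function.comp_apply, hF_def, he_app]
    by_cases h : binCount x' j = 0 ∧ 2 * (k : ℝ) ≤ γ * n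
    · rw [if_pos h, if_pos (hcond.2 h)]
      have h1 : hist x' j = 0 := by unfold hist; rw [h.1]; simp
      have h2 : hist x j = 0 := by unfold hist; rw [(hzero j).2 h.1]; simp
      rw [h1, h2]
    · rw [if_neg h, if_neg (fun hh => h (hcond.1 hh))]
      have hcd : c * d j = hist x' j - hist x j := by
        rw [hd_def]; field_simp
      linear_combination -hcd
  calc sparseMech lap α γ x' B
      = ((Measure.pi fun _ : Fin k => lap).map e).map (F x) B := by
        rw [hsm, hcomp, ← Measure.map_map (hFm x) e.measurable]
    _ = ((Measure.pi fun _ : Fin k => lap).map e) ((F x) ⁻¹' B) := by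
        rw [Measure.map_apply (hFm x) hB]
    _ ≤ ENNReal.ofReal (Real.exp α) * sparseMech lap α γ x B := by
        rw [hmap]
        calc ((Measure.pi fun _ : Fin k => (volume : Measure ℝ)).withDensity
                (fun L => ∏ j, g (L j - d j))) ((F x) ⁻¹' B)
            ≤ ((Measure.pi fun _ : Fin k => (volume : Measure ℝ)).withDensity
                (fun L => ENNReal.ofReal (Real.exp α) * ∏ j, g (L j))) ((F x) ⁻¹' B) := by
              exact Measure.le_iff'.1 (withDensity_mono (Filter.Eventually.of_forall hpoint)) _
          _ = ENNReal.ofReal (Real.exp α) * sparseMech lap α γ x B := by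
              rw [show (fun L : Fin k → ℝ => ENNReal.ofReal (Real.exp α) * ∏ j, g (L j))
                    = ENNReal.ofReal (Real.exp α) • (fun L : Fin k → ℝ => ∏ j, g (L j)) from rfl,
                withDensity_smul _ hGm, ← hlapi, hsm,
                Measure.smul_apply, smul_eq_mul,
                Measure.map_apply (hFm x) hB]


lemma real_bound (m : ℕ) (p : ℝ) (h0 : 0 ≤ p) (h1 : p ≤ 1) :
    p * (1 - p) ^ m ≤ 1 / ((m : ℝ) + 1) := by
  have hb : (1 + (m:ℝ) * p) ≤ (1 + p) ^ m := one_add_mul_le_pow (by linarith) m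
  have hpw : (0:ℝ) ≤ (1 - p) ^ m := pow_nonneg (by linarith) m
  have h2 : (1 + (m:ℝ) * p) * (1 - p) ^ m ≤ ((1 + p) * (1 - p)) ^ m := by
    rw [mul_pow]; exact mul_le_mul_of_nonneg_right hb hpw
  have h3 : ((1 + p) * (1 - p)) ^ m ≤ 1 := by
    apply pow_le_one₀ (by nlinarith) (by nlinarith)
  have h5 : ((m:ℝ) + 1) * p ≤ 1 + m * p := by linarith
  have h6 : (((m:ℝ) + 1) * p) * (1 - p) ^ m ≤ (1 + (m:ℝ) * p) * (1 - p) ^ m :=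
    mul_le_mul_of_nonneg_right h5 hpw
  rw [le_div_iff₀ (by positivity : (0:ℝ) < (m:ℝ) + 1)]
  nlinarith [h6, h2, h3]

lemma bad_bound {k n : ℕ} (hn : 0 < n) (P : Measure (Fin k)) [IsProbabilityMeasure P]
    (t : Fin (n + 1)) (ht : ¬ ((t : ℕ) < n - 1)) :
    (Measure.pi fun _ : Fin (n + 1) => P)
      {ω | ∀ i : Fin (n + 1), (i : ℕ) < n - 1 → ω i ≠ ω t}
      ≤ ENNReal.ofReal ((k : ℝ) / n) := by
  classical
  set μ := Measure.pi fun _ : Fin (n + 1) => P with hμ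
  set S : Fin k → Set (Fin (n + 1) → Fin k) := fun a =>
    Set.pi Set.univ (fun i => if i = t then {a}
      else if (i : ℕ) < n - 1 then ({a}ᶜ : Set (Fin k)) else Set.univ) with hS
  have hsub : {ω | ∀ i : Fin (n + 1), (i : ℕ) < n - 1 → ω i ≠ ω t} ⊆ ⋃ a, S a := by
    intro ω hω
    refine Set.mem_iUnion.2 ⟨ω t, fun i _ => ?_⟩
    dsimp only [S]
    split_ifs with h1 h2
    · rw [h1]; exact Set.mem_singleton _
    · exact hω i h2
    · trivial
  have hSa : ∀ a, μ (S a) ≤ ENNReal.ofReal (1 / (n : ℝ)) := by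
    intro a
    rw [hμ, hS, Measure.pi_pi]
    set f : Fin (n + 1) → ℝ≥0∞ := fun i =>
      P (if i = t then {a} else if (i : ℕ) < n - 1 then ({a}ᶜ : Set (Fin k)) else Set.univ) with hf
    have hft : f t = P {a} := by simp [hf]
    set A : Finset (Fin (n + 1)) := Finset.Iio (⟨n - 1, by omega⟩ : Fin (n + 1)) with hA
    have hmemA : ∀ i, i ∈ A ↔ (i : ℕ) < n - 1 := by
      intro i; rw [hA, Finset.mem_Iio]; exact Iff.rfl
    have hAsub : A ⊆ Finset.univ.erase t := by
      intro i hi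
      refine Finset.mem_erase.2 ⟨?_, Finset.mem_univ _⟩
      intro hit
      exact ht (hit ▸ (hmemA i).1 hi)
    have hApow : ∏ i ∈ A, f i = (P ({a}ᶜ)) ^ (n - 1) := by
      rw [Finset.prod_congr rfl (fun i hi => ?_), Finset.prod_const]
      · congr 1
        rw [hA, Fin.card_Iio]
      · have hilt := (hmemA i).1 hi
        have hit : i ≠ t := fun hit => ht (hit ▸ hilt)
        simp [hf, hit, hilt]
    have hrest : ∏ i ∈ Finset.univ.erase t, f i ≤ (P ({a}ᶜ)) ^ (n - 1) := by
      calc ∏ i ∈ Finset.univ.erase t, f i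
          = (∏ i ∈ (Finset.univ.erase t) \ A, f i) * ∏ i ∈ A, f i :=
            (Finset.prod_sdiff hAsub).symm
        _ ≤ 1 * ∏ i ∈ A, f i :=
            mul_le_mul_left (Finset.prod_le_one (fun _ _ => zero_le ..)
              (fun i _ => prob_le_one)) _
        _ = (P ({a}ᶜ)) ^ (n - 1) := by rw [one_mul, hApow]
    have hsplit : ∏ i, f i ≤ P {a} * (P ({a}ᶜ)) ^ (n - 1) := by
      rw [← Finset.mul_prod_erase Finset.univ f (Finset.mem_univ t), hft]
      exact mul_le_mul_right hrest _
    refine hsplit.trans ?_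
    -- convert to reals
    have hpa : P {a} ≠ ⊤ := measure_ne_top P _
    set pr := (P {a}).toReal with hpr
    have hpr0 : 0 ≤ pr := ENNReal.toReal_nonneg
    have hpr1 : pr ≤ 1 := by
      have := prob_le_one (μ := P) (s := {a})
      calc pr ≤ (1 : ℝ≥0∞).toReal := ENNReal.toReal_mono (by simp) this
        _ = 1 := by simp
    have hq : P ({a}ᶜ) = ENNReal.ofReal (1 - pr) := by
      rw [measure_compl (measurableSet_singleton a) hpa, measure_univ,
        ENNReal.ofReal_sub _ hpr0, ENNReal.ofReal_one, hpr, ENNReal.ofReal_toReal hpa]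
    calc P {a} * (P ({a}ᶜ)) ^ (n - 1)
        = ENNReal.ofReal pr * (ENNReal.ofReal (1 - pr)) ^ (n - 1) := by
          rw [hq, hpr, ENNReal.ofReal_toReal hpa]
      _ = ENNReal.ofReal (pr * (1 - pr) ^ (n - 1)) := by
          rw [← ENNReal.ofReal_pow (by linarith), ← ENNReal.ofReal_mul hpr0]
      _ ≤ ENNReal.ofReal (1 / (n : ℝ)) := by
          apply ENNReal.ofReal_le_ofReal
          have := real_bound (n - 1) pr hpr0 hpr1
          have hcast : ((n - 1 : ℕ) : ℝ) + 1 = (n : ℝ) := by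
            have : n - 1 + 1 = n := by omega
            exact_mod_cast congrArg (Nat.cast : ℕ → ℝ) this
          rwa [hcast] at this
  calc μ {ω | ∀ i : Fin (n + 1), (i : ℕ) < n - 1 → ω i ≠ ω t}
      ≤ μ (⋃ a, S a) := measure_mono hsub
    _ ≤ ∑' a, μ (S a) := measure_iUnion_le _
    _ ≤ ∑' _a : Fin k, ENNReal.ofReal (1 / (n : ℝ)) := ENNReal.tsum_le_tsum hSa
    _ = (k : ℝ≥0∞) * ENNReal.ofReal (1 / (n : ℝ)) := by
        rw [tsum_fintype]
        simp [Finset.sum_const, Finset.card_univ, nsmul_eq_mul]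
    _ = ENNReal.ofReal ((k : ℝ) / n) := by
        rw [← ENNReal.ofReal_natCast k, ← ENNReal.ofReal_mul (by positivity)]
        congr 1
        ring

theorem stmt9 {k n : ℕ} (hn : 0 < n) (α γ : ℝ) (hα : 0 < α) (hγ : 0 < γ)
    (P : Measure (Fin k)) [IsProbabilityMeasure P]
    (lap : Measure ℝ) [IsProbabilityMeasure lap]
    (hlap : lap = volume.withDensity fun t => ENNReal.ofReal ((1 / 2) * Real.exp (-|t|)))
    (hkn : 2 * (k : ℝ) ≤ γ * n) :
    (Measure.pi fun _ : Fin (n + 1) => P)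
        {ω | ∀ B : Set (Fin k → ℝ), MeasurableSet B →
          sparseMech lap α γ (firstN ω) B ≤
              ENNReal.ofReal (Real.exp α) * sparseMech lap α γ (swapLast ω) B ∧
          sparseMech lap α γ (swapLast ω) B ≤
              ENNReal.ofReal (Real.exp α) * sparseMech lap α γ (firstN ω) B}
      ≥ ENNReal.ofReal (1 - γ) := by
  classical
  set μ := Measure.pi fun _ : Fin (n + 1) => P with hμ
  have hn' : (0:ℝ) < n := by exact_mod_cast hn
  set i0 : Fin n := ⟨n - 1, by omega⟩ with hi0
  set t1 : Fin (n + 1) := ⟨n - 1, by omega⟩ with ht1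
  set t2 : Fin (n + 1) := Fin.last n with ht2
  set bad1 : Set (Fin (n + 1) → Fin k) :=
    {ω | ∀ i : Fin (n + 1), (i : ℕ) < n - 1 → ω i ≠ ω t1} with hbad1
  set bad2 : Set (Fin (n + 1) → Fin k) :=
    {ω | ∀ i : Fin (n + 1), (i : ℕ) < n - 1 → ω i ≠ ω t2} with hbad2
  set target : Set (Fin (n + 1) → Fin k) :=
    {ω | ∀ B : Set (Fin k → ℝ), MeasurableSet B →
      sparseMech lap α γ (firstN ω) B ≤
          ENNReal.ofReal (Real.exp α) * sparseMech lap α γ (swapLast ω) B ∧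
      sparseMech lap α γ (swapLast ω) B ≤
          ENNReal.ofReal (Real.exp α) * sparseMech lap α γ (firstN ω) B} with htarget
  -- the good event implies the privacy inequalities
  have hgood : (bad1 ∪ bad2)ᶜ ⊆ target := by
    intro ω hω
    rw [Set.mem_compl_iff, Set.mem_union, not_or] at hω
    obtain ⟨h1, h2⟩ := hω
    obtain ⟨u, hult, hueq⟩ : ∃ i : Fin (n + 1), (i : ℕ) < n - 1 ∧ ω i = ω t1 := by
      by_contra hcon
      push_neg at hcon
      exact h1 fun i hi => hcon i hi
    obtain ⟨v, hvlt, hveq⟩ : ∃ i : Fin (n + 1), (i : ℕ) < n - 1 ∧ ω i = ω t2 := by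
      by_contra hcon
      push_neg at hcon
      exact h2 fun i hi => hcon i hi
    set u' : Fin n := ⟨(u : ℕ), by omega⟩ with hu'
    set v' : Fin n := ⟨(v : ℕ), by omega⟩ with hv'
    have hu'c : u'.castSucc = u := Fin.ext rfl
    have hv'c : v'.castSucc = v := Fin.ext rfl
    have hi0c : i0.castSucc = t1 := Fin.ext rfl
    have hfu : firstN ω u' = ω t1 := by rw [firstN, hu'c, hueq]
    have hfv : firstN ω v' = ω t2 := by rw [firstN, hv'c, hveq]
    have hu'ne : (u' : ℕ) ≠ n - 1 := by show (u:ℕ) ≠ n - 1; omega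
    have hv'ne : (v' : ℕ) ≠ n - 1 := by show (v:ℕ) ≠ n - 1; omega
    have hsu : swapLast ω u' = ω t1 := by rw [swapLast]; rw [if_neg hu'ne, hu'c, hueq]
    have hsv : swapLast ω v' = ω t2 := by rw [swapLast]; rw [if_neg hv'ne, hv'c, hveq]
    have hfi0 : firstN ω i0 = ω t1 := by rw [firstN, hi0c]
    have hsi0 : swapLast ω i0 = ω t2 := by
      rw [swapLast, if_pos (show ((i0 : ℕ) = n - 1) from rfl)]
    have hx : ∀ i : Fin n, i ≠ i0 → firstN ω i = swapLast ω i := by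
      intro i hi
      have hiv : (i : ℕ) ≠ n - 1 := by
        intro h
        exact hi (Fin.ext (by simpa [hi0] using h))
      rw [firstN, swapLast, if_neg hiv]
    have hexists : ∀ j, (∃ i, firstN ω i = j) ↔ (∃ i, swapLast ω i = j) := by
      intro j
      constructor
      · rintro ⟨i, hij⟩
        by_cases hi : i = i0
        · subst hi
          exact ⟨u', by rw [hsu, ← hfi0, hij]⟩
        · exact ⟨i, by rw [← hx i hi, hij]⟩
      · rintro ⟨i, hij⟩
        by_cases hi : i = i0
        · subst hi
          exact ⟨v', by rw [hfv, ← hsi0, hij]⟩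
        · exact ⟨i, by rw [hx i hi, hij]⟩
    have hzero : ∀ j, binCount (firstN ω) j = 0 ↔ binCount (swapLast ω) j = 0 := by
      intro j
      have hbc : ∀ y : Fin n → Fin k, binCount y j = 0 ↔ ¬ ∃ i, y i = j := by
        intro y
        simp [binCount, Finset.card_eq_zero, Finset.filter_eq_empty_iff]
      rw [hbc, hbc]
      exact not_congr (hexists j)
    intro B hB
    refine ⟨?_, ?_⟩
    · exact key hn hα lap hlap (swapLast ω) (firstN ω) i0
        (fun i hi => (hx i hi).symm) (fun j => (hzero j).symm) B hB
    · exact key hn hα lap hlap (firstN ω) (swapLast ω) i0 hx hzero B hB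
  -- probability of the bad events
  have hb1 : μ bad1 ≤ ENNReal.ofReal ((k : ℝ) / n) :=
    bad_bound hn P t1 (by show ¬(n - 1 < n - 1); omega)
  have hb2 : μ bad2 ≤ ENNReal.ofReal ((k : ℝ) / n) :=
    bad_bound hn P t2 (by show ¬(n < n - 1); omega)
  have hbad : μ (bad1 ∪ bad2) ≤ ENNReal.ofReal γ := by
    calc μ (bad1 ∪ bad2) ≤ μ bad1 + μ bad2 := measure_union_le _ _
      _ ≤ ENNReal.ofReal ((k : ℝ) / n) + ENNReal.ofReal ((k : ℝ) / n) :=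
          add_le_add hb1 hb2
      _ = ENNReal.ofReal ((k : ℝ) / n + (k : ℝ) / n) :=
          (ENNReal.ofReal_add (by positivity) (by positivity)).symm
      _ ≤ ENNReal.ofReal γ := by
          apply ENNReal.ofReal_le_ofReal
          rw [← add_div, div_le_iff₀ hn']
          linarith
  have h1le : (1 : ℝ≥0∞) ≤ μ (bad1 ∪ bad2) + μ ((bad1 ∪ bad2)ᶜ) := by
    calc (1 : ℝ≥0∞) = μ Set.univ := measure_univ.symm
      _ = μ ((bad1 ∪ bad2) ∪ (bad1 ∪ bad2)ᶜ) := by rw [Set.union_compl_self]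
      _ ≤ μ (bad1 ∪ bad2) + μ ((bad1 ∪ bad2)ᶜ) := measure_union_le _ _
  calc ENNReal.ofReal (1 - γ) = 1 - ENNReal.ofReal γ := by
        rw [ENNReal.ofReal_sub _ hγ.le, ENNReal.ofReal_one]
    _ ≤ μ ((bad1 ∪ bad2)ᶜ) := by
        rw [tsub_le_iff_right]
        refine h1le.trans ?_
        rw [add_comm]
        exact add_le_add_right hbad _
    _ ≤ μ target := measure_mono hgood
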